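/- Critical Simplex Corollary: Let X ⊆ ℝⁿ be finite and in general position, and Q ⊆ X with |Q| ≤ n+1. The following are equivalent: (a) the center of the smallest circumsphere of Q lies in the convex hull of Q and no point of X \ Q lies on or inside this sphere; (b) for every E ⊆ X, the smallest sphere including Q and excluding E exists and equals the smallest circumsphere of Q; (c) the squared radius of the smallest sphere including Q and excluding ∅ equals the squared radius of the smallest sphere including Q and excluding X. -/

import Mathlib

open RealInnerProductSpace

section Aux

variable {n : ℕ}

/-- Averaging lemma: if `z` is in the convex hull of `Q` and equidistant (squared `s`)
from all points of `Q`, then any sphere containing `Q` has squared radius at least `s`. -/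
private lemma avg_min {Q : Finset (EuclideanSpace ℝ (Fin n))} {z : EuclideanSpace ℝ (Fin n)}
    {s : ℝ} (hz : z ∈ convexHull ℝ (Q : Set (EuclideanSpace ℝ (Fin n))))
    (hs : ∀ q ∈ Q, dist z q ^ 2 = s) (z' : EuclideanSpace ℝ (Fin n)) {s' : ℝ}
    (h' : ∀ q ∈ Q, dist z' q ^ 2 ≤ s') : s ≤ s' := by
  rw [Finset.convexHull_eq] at hz
  obtain ⟨w, hw0, hw1, hwz⟩ := hz
  rw [Finset.centerMass_eq_of_sum_1 _ _ hw1] at hwz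
  simp only [id] at hwz
  have key : ∀ q ∈ Q, dist z' q ^ 2
      = ‖z' - z‖ ^ 2 + 2 * ⟪z' - z, z - q⟫ + dist z q ^ 2 := by
    intro q hq
    rw [dist_eq_norm, dist_eq_norm]
    have h : z' - q = (z' - z) + (z - q) := by abel
    rw [h, norm_add_sq_real]
  have hsum0 : ∑ q ∈ Q, w q • (z - q) = (0 : EuclideanSpace ℝ (Fin n)) := by
    have : ∑ q ∈ Q, w q • (z - q) = (∑ q ∈ Q, w q) • z - ∑ q ∈ Q, w q • q := by
      rw [Finset.sum_smul, ← Finset.sum_sub_distrib]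
      exact Finset.sum_congr rfl fun q hq => by rw [smul_sub]
    rw [this, hw1, one_smul, hwz, sub_self]
  have hinner : ∑ q ∈ Q, w q * ⟪z' - z, z - q⟫ = 0 := by
    have : ∑ q ∈ Q, w q * ⟪z' - z, z - q⟫ = ⟪z' - z, ∑ q ∈ Q, w q • (z - q)⟫ := by
      rw [inner_sum]
      exact Finset.sum_congr rfl fun q hq => (real_inner_smul_right _ _ _).symm
    rw [this, hsum0, inner_zero_right]
  have e1 : ∑ q ∈ Q, w q * dist z' q ^ 2 = ‖z' - z‖ ^ 2 + s := by
    have : ∀ q ∈ Q, w q * dist z' q ^ 2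
        = w q * ‖z' - z‖ ^ 2 + 2 * (w q * ⟪z' - z, z - q⟫) + w q * s := by
      intro q hq; rw [key q hq, hs q hq]; ring
    rw [Finset.sum_congr rfl this, Finset.sum_add_distrib, Finset.sum_add_distrib,
      ← Finset.sum_mul, ← Finset.mul_sum, ← Finset.sum_mul, hw1, hinner]
    ring
  have e2 : ∑ q ∈ Q, w q * dist z' q ^ 2 ≤ ∑ q ∈ Q, w q * s' :=
    Finset.sum_le_sum fun q hq => mul_le_mul_of_nonneg_left (h' q hq) (hw0 q hq)
  have e3 : ∑ q ∈ Q, w q * s' = s' := by rw [← Finset.sum_mul, hw1, one_mul]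
  nlinarith [sq_nonneg ‖z' - z‖]

/-- Projection lemma: if `z` is not in the convex hull of nonempty `Q`, there is a point
uniformly strictly closer to every point of `Q`. -/
private lemma proj_lemma {Q : Finset (EuclideanSpace ℝ (Fin n))} (hQ : Q.Nonempty)
    {z : EuclideanSpace ℝ (Fin n)} (hz : z ∉ convexHull ℝ (Q : Set (EuclideanSpace ℝ (Fin n)))) :
    ∃ (z' : EuclideanSpace ℝ (Fin n)) (d : ℝ), 0 < d ∧
      ∀ q ∈ Q, dist z' q ^ 2 ≤ dist z q ^ 2 - d := by
  set K : Set (EuclideanSpace ℝ (Fin n)) := convexHull ℝ (Q : Set (EuclideanSpace ℝ (Fin n)))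
    with hK
  have hKc : Convex ℝ K := convex_convexHull ℝ _
  have hKne : K.Nonempty := hQ.to_set.mono (subset_convexHull ℝ _)
  have hKcompact : IsCompact K := Q.finite_toSet.isCompact_convexHull ℝ
  have hKcomplete : IsComplete K := hKcompact.isComplete
  obtain ⟨v, hvK, hv⟩ := exists_norm_eq_iInf_of_complete_convex hKne hKcomplete hKc z
  have hperp : ∀ w ∈ K, ⟪z - v, w - v⟫ ≤ 0 :=
    (norm_eq_iInf_iff_real_inner_le_zero hKc hvK).mp hv
  have hzv : z ≠ v := fun h => hz (h ▸ hvK)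
  refine ⟨v, ‖z - v‖ ^ 2, pow_pos (norm_pos_iff.mpr (sub_ne_zero.mpr hzv)) 2, fun q hq => ?_⟩
  have hqK : q ∈ K := subset_convexHull ℝ _ hq
  have h1 : dist z q ^ 2 = ‖z - v‖ ^ 2 + 2 * ⟪z - v, v - q⟫ + dist v q ^ 2 := by
    rw [dist_eq_norm, dist_eq_norm]
    have h : z - q = (z - v) + (v - q) := by abel
    rw [h, norm_add_sq_real]
  have h2 : ⟪z - v, v - q⟫ = - ⟪z - v, q - v⟫ := by
    rw [← inner_neg_right]; congr 1; abel
  have := hperp q hqK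
  nlinarith [h1, h2]

/-- Uniqueness of the circumsphere with center in the affine span. -/
private lemma circ_unique {Q : Finset (EuclideanSpace ℝ (Fin n))} (hQ : Q.Nonempty)
    {z₀ z₁ : EuclideanSpace ℝ (Fin n)} {s₀ s₁ : ℝ}
    (hz₀ : z₀ ∈ affineSpan ℝ (Q : Set (EuclideanSpace ℝ (Fin n))))
    (hz₁ : z₁ ∈ affineSpan ℝ (Q : Set (EuclideanSpace ℝ (Fin n))))
    (hs₀ : ∀ q ∈ Q, dist z₀ q ^ 2 = s₀) (hs₁ : ∀ q ∈ Q, dist z₁ q ^ 2 = s₁) :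
    z₀ = z₁ ∧ s₀ = s₁ := by
  have hconst : ∀ q ∈ Q, 2 * ⟪z₀ - z₁, q⟫ = ‖z₀‖ ^ 2 - ‖z₁‖ ^ 2 - (s₀ - s₁) := by
    intro q hq
    have h0 := hs₀ q hq
    have h1 := hs₁ q hq
    rw [dist_eq_norm, ← real_inner_self_eq_norm_sq] at h0 h1
    rw [inner_sub_sub_self] at h0 h1
    rw [inner_sub_left]
    have e0 : (inner ℝ z₀ z₀ : ℝ) = ‖z₀‖ ^ 2 := real_inner_self_eq_norm_sq z₀
    have e1 : (inner ℝ z₁ z₁ : ℝ) = ‖z₁‖ ^ 2 := real_inner_self_eq_norm_sq z₁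
    linarith [real_inner_comm z₀ q, real_inner_comm z₁ q]
  have hdiff : ∀ p ∈ Q, ∀ q ∈ Q, ⟪z₀ - z₁, p - q⟫ = 0 := by
    intro p hp q hq
    have := hconst p hp
    have := hconst q hq
    rw [inner_sub_right]
    linarith
  have hmem : z₀ - z₁ ∈ vectorSpan ℝ (Q : Set (EuclideanSpace ℝ (Fin n))) := by
    have := AffineSubspace.vsub_mem_direction hz₀ hz₁
    rwa [direction_affineSpan] at this
  have horth : ∀ v ∈ vectorSpan ℝ (Q : Set (EuclideanSpace ℝ (Fin n))),
      ⟪z₀ - z₁, v⟫ = 0 := by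
    intro v hv
    rw [vectorSpan_def] at hv
    induction hv using Submodule.span_induction with
    | mem x hx =>
      obtain ⟨p, hp, q, hq, rfl⟩ := hx
      exact hdiff p hp q hq
    | zero => exact inner_zero_right _
    | add x y hx hy ihx ihy => rw [inner_add_right, ihx, ihy, add_zero]
    | smul a x hx ihx => rw [real_inner_smul_right, ihx, mul_zero]
  have h0 : z₀ - z₁ = 0 := by
    have := horth _ hmem
    rwa [inner_self_eq_zero] at this
  have hz : z₀ = z₁ := sub_eq_zero.mp h0
  obtain ⟨q, hq⟩ := hQ
  exact ⟨hz, by rw [← hs₀ q hq, ← hs₁ q hq, hz]⟩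

end Aux

/-- A sphere with center `z` and squared radius `s ≥ 0` includes `Q`, excludes `E`, and has
minimal squared radius among all such spheres. -/
def IsSmallestSphere {n : ℕ} (Q E : Finset (EuclideanSpace ℝ (Fin n)))
    (z : EuclideanSpace ℝ (Fin n)) (s : ℝ) : Prop :=
  0 ≤ s ∧ (∀ q ∈ Q, dist z q ^ 2 ≤ s) ∧ (∀ e ∈ E, s ≤ dist z e ^ 2) ∧
    ∀ (z' : EuclideanSpace ℝ (Fin n)) (s' : ℝ), 0 ≤ s' →
      (∀ q ∈ Q, dist z' q ^ 2 ≤ s') → (∀ e ∈ E, s' ≤ dist z' e ^ 2) → s ≤ s'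

/-- General position: any at most `n + 1` points of `X` are affinely independent, and no
point of `X` outside such a subset `Q` lies on the smallest circumsphere of `Q`. -/
def GenPos {n : ℕ} (X : Finset (EuclideanSpace ℝ (Fin n))) : Prop :=
  ∀ Q : Finset (EuclideanSpace ℝ (Fin n)), Q ⊆ X → Q.card ≤ n + 1 →
    AffineIndependent ℝ (fun q : (Q : Set (EuclideanSpace ℝ (Fin n))) =>
      (q : EuclideanSpace ℝ (Fin n))) ∧
    ∀ (z : EuclideanSpace ℝ (Fin n)) (s : ℝ),
      z ∈ affineSpan ℝ (Q : Set (EuclideanSpace ℝ (Fin n))) →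
      (∀ q ∈ Q, dist z q ^ 2 = s) → ∀ p ∈ X, p ∉ Q → dist z p ^ 2 ≠ s

section Dirs

variable {n : ℕ} {X Q : Finset (EuclideanSpace ℝ (Fin n))}

private lemma a_to_b (hQX : Q ⊆ X) (hQ : Q.Nonempty)
    (ha : ∃ (z : EuclideanSpace ℝ (Fin n)) (s : ℝ),
        (∀ q ∈ Q, dist z q ^ 2 = s) ∧
        z ∈ convexHull ℝ (Q : Set (EuclideanSpace ℝ (Fin n))) ∧
        ∀ p ∈ X, p ∉ Q → s < dist z p ^ 2) :
    ∀ E : Finset (EuclideanSpace ℝ (Fin n)), E ⊆ X →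
      ∃ (z : EuclideanSpace ℝ (Fin n)) (s : ℝ), IsSmallestSphere Q E z s ∧
        (∀ q ∈ Q, dist z q ^ 2 = s) ∧
        z ∈ affineSpan ℝ (Q : Set (EuclideanSpace ℝ (Fin n))) := by
  obtain ⟨z, s, heq, hconv, hstrict⟩ := ha
  intro E hEX
  obtain ⟨q₀, hq₀⟩ := hQ
  refine ⟨z, s, ⟨heq q₀ hq₀ ▸ sq_nonneg _, fun q hq => (heq q hq).le, ?_, ?_⟩, heq,
    convexHull_subset_affineSpan _ hconv⟩
  · intro e he
    by_cases heQ : e ∈ Q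
    · exact (heq e heQ).ge
    · exact (hstrict e (hEX he) heQ).le
  · intro z' s' _ hincl _
    exact avg_min hconv heq z' hincl

private lemma c_to_a (hGP : GenPos X) (hQX : Q ⊆ X) (hQ : Q.Nonempty) (hcard : Q.card ≤ n + 1)
    (hc : ∃ (z₀ : EuclideanSpace ℝ (Fin n)) (s₀ : ℝ)
        (z₁ : EuclideanSpace ℝ (Fin n)) (s₁ : ℝ),
        IsSmallestSphere Q ∅ z₀ s₀ ∧ IsSmallestSphere Q X z₁ s₁ ∧ s₀ = s₁) :
    ∃ (z : EuclideanSpace ℝ (Fin n)) (s : ℝ),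
        (∀ q ∈ Q, dist z q ^ 2 = s) ∧
        z ∈ convexHull ℝ (Q : Set (EuclideanSpace ℝ (Fin n))) ∧
        ∀ p ∈ X, p ∉ Q → s < dist z p ^ 2 := by
  obtain ⟨z₀, s₀, z₁, s₁, ⟨hs₀0, hincl₀, _, hmin₀⟩, ⟨hs₁0, hincl₁, hexcl₁, _⟩, hseq⟩ := hc
  have heq : ∀ q ∈ Q, dist z₁ q ^ 2 = s₁ :=
    fun q hq => le_antisymm (hincl₁ q hq) (hexcl₁ q (hQX hq))
  have hconv : z₁ ∈ convexHull ℝ (Q : Set (EuclideanSpace ℝ (Fin n))) := by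
    by_contra h
    obtain ⟨z', d, hd, hz'⟩ := proj_lemma hQ h
    obtain ⟨q₀, hq₀⟩ := hQ
    have hz'' : ∀ q ∈ Q, dist z' q ^ 2 ≤ s₁ - d := by
      intro q hq
      have := hz' q hq
      rw [heq q hq] at this
      exact this
    have h0 : 0 ≤ s₁ - d := le_trans (sq_nonneg (dist z' q₀)) (hz'' q₀ hq₀)
    have := hmin₀ z' (s₁ - d) h0 hz'' (fun e he => absurd he (Finset.notMem_empty e))
    linarith
  refine ⟨z₁, s₁, heq, hconv, fun p hp hpQ => ?_⟩
  have hne := (hGP Q hQX hcard).2 z₁ s₁ (convexHull_subset_affineSpan _ hconv) heq p hp hpQ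
  exact lt_of_le_of_ne (hexcl₁ p hp) (Ne.symm hne)

private lemma b_to_c (hQ : Q.Nonempty)
    (hb : ∀ E : Finset (EuclideanSpace ℝ (Fin n)), E ⊆ X →
      ∃ (z : EuclideanSpace ℝ (Fin n)) (s : ℝ), IsSmallestSphere Q E z s ∧
        (∀ q ∈ Q, dist z q ^ 2 = s) ∧
        z ∈ affineSpan ℝ (Q : Set (EuclideanSpace ℝ (Fin n)))) :
    ∃ (z₀ : EuclideanSpace ℝ (Fin n)) (s₀ : ℝ)
        (z₁ : EuclideanSpace ℝ (Fin n)) (s₁ : ℝ),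
      IsSmallestSphere Q ∅ z₀ s₀ ∧ IsSmallestSphere Q X z₁ s₁ ∧ s₀ = s₁ := by
  obtain ⟨z₀, s₀, hS₀, heq₀, haff₀⟩ := hb ∅ (Finset.empty_subset X)
  obtain ⟨z₁, s₁, hS₁, heq₁, haff₁⟩ := hb X (subset_refl X)
  exact ⟨z₀, s₀, z₁, s₁, hS₀, hS₁, (circ_unique hQ haff₀ haff₁ heq₀ heq₁).2⟩

end Dirs

/-- **Critical Simplex Corollary.**
For `X ⊆ ℝⁿ` finite in general position and `Q ⊆ X` nonempty with at most `n + 1`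
points, the following are equivalent:
(a) the center of the smallest circumsphere of `Q` lies in the convex hull of `Q` and no
    point of `X \ Q` lies on or inside this sphere (a centered Delaunay simplex);
(b) for every `E ⊆ X`, the smallest sphere including `Q` and excluding `E` exists and
    equals the smallest circumsphere of `Q`;
(c) the smallest sphere including `Q` and excluding `∅` and the smallest sphere
    including `Q` and excluding `X` have the same squared radius. -/
theorem critical_simplex_corollary (n : ℕ)
    (X Q : Finset (EuclideanSpace ℝ (Fin n)))
    (hGP : GenPos X) (hQX : Q ⊆ X) (hQ : Q.Nonempty) (hcard : Q.card ≤ n + 1) :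
    ((∃ (z : EuclideanSpace ℝ (Fin n)) (s : ℝ),
        (∀ q ∈ Q, dist z q ^ 2 = s) ∧
        z ∈ convexHull ℝ (Q : Set (EuclideanSpace ℝ (Fin n))) ∧
        ∀ p ∈ X, p ∉ Q → s < dist z p ^ 2) ↔
      (∀ E : Finset (EuclideanSpace ℝ (Fin n)), E ⊆ X →
        ∃ (z : EuclideanSpace ℝ (Fin n)) (s : ℝ), IsSmallestSphere Q E z s ∧
          (∀ q ∈ Q, dist z q ^ 2 = s) ∧
          z ∈ affineSpan ℝ (Q : Set (EuclideanSpace ℝ (Fin n))))) ∧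
    ((∀ E : Finset (EuclideanSpace ℝ (Fin n)), E ⊆ X →
        ∃ (z : EuclideanSpace ℝ (Fin n)) (s : ℝ), IsSmallestSphere Q E z s ∧
          (∀ q ∈ Q, dist z q ^ 2 = s) ∧
          z ∈ affineSpan ℝ (Q : Set (EuclideanSpace ℝ (Fin n)))) ↔
      (∃ (z₀ : EuclideanSpace ℝ (Fin n)) (s₀ : ℝ)
          (z₁ : EuclideanSpace ℝ (Fin n)) (s₁ : ℝ),
        IsSmallestSphere Q ∅ z₀ s₀ ∧ IsSmallestSphere Q X z₁ s₁ ∧ s₀ = s₁)) := by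
  exact ⟨⟨fun ha => a_to_b hQX hQ ha,
      fun hb => c_to_a hGP hQX hQ hcard (b_to_c hQ hb)⟩,
    ⟨b_to_c hQ,
      fun hc => a_to_b hQX hQ (c_to_a hGP hQX hQ hcard hc)⟩⟩
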